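/- The set S := {u ∈ X : 0 < ‖u‖ ≤ ρ, ψ(u) ≤ 0} is a retract of {u ∈ X : 0 < ‖u‖ ≤ ρ}: there exists a continuous map g : {u ∈ X : 0 < ‖u‖ ≤ ρ} → S with g(u) = u whenever ψ(u) ≤ 0 (namely g(u) := τ(u)·u, where τ(u) = 1 if ψ(u) ≤ 0 and τ(u) is the unique zero in (0,1] of s ↦ ψ(s·u) otherwise). -/

import Mathlib

open Set Filter Topology

private lemma slope_left_aux {f : ℝ → ℝ} {c d : ℝ} (hf : HasDerivAt f d c) (hd : 0 < d) :
    ∀ᶠ s in nhdsWithin c (Set.Iio c), f s < f c := by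
  have h := hasDerivAt_iff_tendsto_slope.mp hf
  have h2 : ∀ᶠ s in nhdsWithin c {c}ᶜ, 0 < slope f c s := h.eventually (eventually_gt_nhds hd)
  have h3 : nhdsWithin c (Set.Iio c) ≤ nhdsWithin c {c}ᶜ :=
    nhdsWithin_mono c fun x hx => ne_of_lt hx
  filter_upwards [h3 h2, self_mem_nhdsWithin] with s hs hs'
  rw [slope_def_field] at hs
  rcases div_pos_iff.mp hs with ⟨h1, h2'⟩ | ⟨h1, h2'⟩
  · simp only [Set.mem_Iio] at hs'; linarith
  · linarith

private lemma slope_right_aux {f : ℝ → ℝ} {c d : ℝ} (hf : HasDerivAt f d c) (hd : 0 < d) :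
    ∀ᶠ s in nhdsWithin c (Set.Ioi c), f c < f s := by
  have h := hasDerivAt_iff_tendsto_slope.mp hf
  have h2 : ∀ᶠ s in nhdsWithin c {c}ᶜ, 0 < slope f c s := h.eventually (eventually_gt_nhds hd)
  have h3 : nhdsWithin c (Set.Ioi c) ≤ nhdsWithin c {c}ᶜ :=
    nhdsWithin_mono c fun x hx => ne_of_gt hx
  filter_upwards [h3 h2, self_mem_nhdsWithin] with s hs hs'
  rw [slope_def_field] at hs
  simp only [Set.mem_Ioi] at hs'
  rcases div_pos_iff.mp hs with ⟨h1, h2'⟩ | ⟨h1, h2'⟩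
  · linarith
  · linarith

/-- `(B̄_ρ ∩ ψ⁰) \ {0}` is a retract of `B̄_ρ \ {0}`: there is a continuous map
`g` of `{u : 0 < ‖u‖ ≤ ρ}` into `S = {u : 0 < ‖u‖ ≤ ρ, ψ(u) ≤ 0}` which restricts to
the identity on `S`. -/
theorem stmt_10 {X : Type*} [NormedAddCommGroup X] [NormedSpace ℝ X]
    (ρ : ℝ) (hρ : 0 < ρ) (ψ : X → ℝ) (hψ : ContDiff ℝ 1 ψ) (hψ0 : ψ 0 = 0)
    (H1 : ∀ v : X, 0 < ‖v‖ → ‖v‖ ≤ 2 * ρ → 0 ≤ ψ v → 0 < fderiv ℝ ψ v v)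
    (H2 : ∀ u : X, u ≠ 0 → ∀ᶠ τ in nhdsWithin (0:ℝ) (Set.Ioi 0), ψ (τ • u) < 0) :
    ∃ g : X → X,
      ContinuousOn g {u : X | 0 < ‖u‖ ∧ ‖u‖ ≤ ρ} ∧
      (∀ u : X, 0 < ‖u‖ → ‖u‖ ≤ ρ →
        0 < ‖g u‖ ∧ ‖g u‖ ≤ ρ ∧ ψ (g u) ≤ 0) ∧
      (∀ u : X, 0 < ‖u‖ → ‖u‖ ≤ ρ → ψ u ≤ 0 → g u = u) := by
  have ψcont : Continuous ψ := hψ.continuous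
  have ψdiff : Differentiable ℝ ψ := hψ.differentiable one_ne_zero
  -- continuity of s ↦ ψ (s • u)
  have hcs : ∀ u : X, Continuous fun s : ℝ => ψ (s • u) :=
    fun u => ψcont.comp (continuous_id.smul continuous_const)
  -- derivative of s ↦ ψ (s • u)
  have hderiv : ∀ (u : X) (c : ℝ),
      HasDerivAt (fun s : ℝ => ψ (s • u)) (fderiv ℝ ψ (c • u) u) c := by
    intro u c
    have h1 : HasDerivAt (fun s : ℝ => s • u) u c := by
      simpa using (hasDerivAt_id c).smul_const u
    have h2 := (ψdiff (c • u)).hasFDerivAt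
    exact h2.comp_hasDerivAt c h1
  -- positive derivative from H1
  have hderivpos : ∀ (u : X) (c : ℝ), 0 < ‖u‖ → ‖u‖ ≤ ρ → 0 < c → c ≤ 2 →
      0 ≤ ψ (c • u) → 0 < fderiv ℝ ψ (c • u) u := by
    intro u c hu hu2 hc hc2 hψc
    have hn : 0 < ‖c • u‖ := by
      rw [norm_smul, Real.norm_eq_abs, abs_of_pos hc]; positivity
    have hn2 : ‖c • u‖ ≤ 2 * ρ := by
      rw [norm_smul, Real.norm_eq_abs, abs_of_pos hc]; nlinarith
    have h := H1 (c • u) hn hn2 hψc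
    rw [map_smul, smul_eq_mul] at h
    nlinarith
  -- Forward invariance, strict version
  have lemA' : ∀ (u : X), 0 < ‖u‖ → ‖u‖ ≤ ρ → ∀ s t : ℝ, 0 < s → s < t → t ≤ 2 →
      0 < ψ (s • u) → 0 < ψ (t • u) := by
    intro u hu hu2 s t hs hst ht2 hψs
    by_contra hc
    push_neg at hc
    set B : Set ℝ := {r | r ∈ Set.Icc s t ∧ ψ (r • u) ≤ 0} with hB
    have hBne : B.Nonempty := ⟨t, ⟨le_of_lt hst, le_rfl⟩, hc⟩
    have hBbdd : BddBelow B := ⟨s, fun r hr => hr.1.1⟩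
    have hBclosed : IsClosed B :=
      (isClosed_Icc.inter (isClosed_le (hcs u) continuous_const))
    have hcMem : sInf B ∈ B := hBclosed.csInf_mem hBne hBbdd
    set c := sInf B with hcdef
    have hcs' : s ≤ c := hcMem.1.1
    have hct : c ≤ t := hcMem.1.2
    have hψc : ψ (c • u) ≤ 0 := hcMem.2
    have hsc : s < c := by
      rcases eq_or_lt_of_le hcs' with h | h
      · exfalso; rw [← h] at hψc; linarith
      · exact h
    -- on [s, c), ψ (r • u) > 0
    have hpos : ∀ r : ℝ, s ≤ r → r < c → 0 < ψ (r • u) := by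
      intro r hr1 hr2
      by_contra hr
      push_neg at hr
      have : r ∈ B := ⟨⟨hr1, le_of_lt (lt_of_lt_of_le hr2 hct)⟩, hr⟩
      exact absurd (csInf_le hBbdd this) (not_le.mpr hr2)
    -- ψ (c • u) ≥ 0 by left continuity
    have hψc0 : 0 ≤ ψ (c • u) := by
      have htend : Filter.Tendsto (fun r : ℝ => ψ (r • u)) (nhdsWithin c (Set.Iio c))
          (nhds (ψ (c • u))) := ((hcs u).tendsto c).mono_left nhdsWithin_le_nhds
      have hev : ∀ᶠ r in nhdsWithin c (Set.Iio c), 0 ≤ ψ (r • u) := by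
        have : Set.Ico s c ∈ nhdsWithin c (Set.Iio c) := by
          rw [mem_nhdsWithin_iff_exists_mem_nhds_inter]
          exact ⟨Set.Ioi s, Ioi_mem_nhds hsc, fun r hr => ⟨le_of_lt hr.1, hr.2⟩⟩
        filter_upwards [this] with r hr
        exact le_of_lt (hpos r hr.1 hr.2)
      exact ge_of_tendsto htend hev
    have hψceq : ψ (c • u) = 0 := le_antisymm hψc hψc0
    -- derivative at c is positive, so values just left of c are < 0, contradiction
    have hd := hderivpos u c hu hu2 (lt_trans hs hsc) (le_trans hct ht2) hψc0
    have hleft := slope_left_aux (hderiv u c) hd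
    have : ∀ᶠ r in nhdsWithin c (Set.Iio c), (0:ℝ) < ψ (r • u) := by
      have : Set.Ico s c ∈ nhdsWithin c (Set.Iio c) := by
        rw [mem_nhdsWithin_iff_exists_mem_nhds_inter]
        exact ⟨Set.Ioi s, Ioi_mem_nhds hsc, fun r hr => ⟨le_of_lt hr.1, hr.2⟩⟩
      filter_upwards [this] with r hr
      exact hpos r hr.1 hr.2
    rcases (hleft.and this).exists with ⟨r, hr1, hr2⟩
    rw [hψceq] at hr1
    linarith
  -- Forward invariance from ψ ≥ 0
  have lemA : ∀ (u : X), 0 < ‖u‖ → ‖u‖ ≤ ρ → ∀ s t : ℝ, 0 < s → s < t → t ≤ 2 →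
      0 ≤ ψ (s • u) → 0 < ψ (t • u) := by
    intro u hu hu2 s t hs hst ht2 hψs
    rcases lt_or_eq_of_le hψs with h | h
    · exact lemA' u hu hu2 s t hs hst ht2 h
    · -- ψ (s • u) = 0: derivative positive, find s' ∈ (s, t) with ψ (s' • u) > 0
      have hd := hderivpos u s hu hu2 hs (by linarith) hψs
      have hright := slope_right_aux (hderiv u s) hd
      have hmem : Set.Ioo s t ∈ nhdsWithin s (Set.Ioi s) := by
        rw [mem_nhdsWithin_iff_exists_mem_nhds_inter]
        exact ⟨Set.Iio t, Iio_mem_nhds hst, fun r hr => ⟨hr.2, hr.1⟩⟩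
      rcases (hright.and hmem).exists with ⟨s', hs'1, hs'2⟩
      rw [← h] at hs'1
      exact lemA' u hu hu2 s' t (lt_trans hs hs'2.1) hs'2.2 ht2 hs'1
  -- Definition of τ
  set T : X → Set ℝ := fun u => {s | s ∈ Set.Icc (0:ℝ) 1 ∧ ψ (s • u) ≤ 0} with hT
  set τ : X → ℝ := fun u => sSup (T u) with hτ
  have hTne : ∀ u, (T u).Nonempty := by
    intro u
    exact ⟨0, ⟨le_rfl, zero_le_one⟩, by rw [zero_smul, hψ0]⟩
  have hTbdd : ∀ u, BddAbove (T u) := fun u => ⟨1, fun s hs => hs.1.2⟩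
  have hTclosed : ∀ u, IsClosed (T u) :=
    fun u => isClosed_Icc.inter (isClosed_le (hcs u) continuous_const)
  have hτmem : ∀ u, τ u ∈ T u := fun u => (hTclosed u).csSup_mem (hTne u) (hTbdd u)
  have hτle1 : ∀ u, τ u ≤ 1 := fun u => (hτmem u).1.2
  have hτψ : ∀ u, ψ (τ u • u) ≤ 0 := fun u => (hτmem u).2
  -- τ u > 0 on the domain
  have hτpos : ∀ u : X, 0 < ‖u‖ → 0 < τ u := by
    intro u hu
    have hune : u ≠ 0 := by intro h; rw [h, norm_zero] at hu; exact lt_irrefl 0 hu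
    have h2 := H2 u hune
    have hmem : Set.Ioo (0:ℝ) 1 ∈ nhdsWithin (0:ℝ) (Set.Ioi 0) := by
      rw [mem_nhdsWithin_iff_exists_mem_nhds_inter]
      exact ⟨Set.Iio 1, Iio_mem_nhds (by norm_num : (0:ℝ) < 1), fun r hr => ⟨hr.2, hr.1⟩⟩
    rcases (h2.and hmem).exists with ⟨t, ht1, ht2⟩
    have : t ∈ T u := ⟨⟨le_of_lt ht2.1, le_of_lt ht2.2⟩, le_of_lt ht1⟩
    exact lt_of_lt_of_le ht2.1 (le_csSup (hTbdd u) this)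
  -- Below τ u, ψ is negative
  have hbelow : ∀ u : X, 0 < ‖u‖ → ‖u‖ ≤ ρ → ∀ s : ℝ, 0 < s → s < τ u → ψ (s • u) < 0 := by
    intro u hu hu2 s hs hsτ
    by_contra h
    push_neg at h
    have := lemA u hu hu2 s (τ u) hs hsτ (le_trans (hτle1 u) one_le_two) h
    linarith [hτψ u]
  -- ψ u ≤ 0 implies τ u = 1
  have hτeq1 : ∀ u : X, ψ u ≤ 0 → τ u = 1 := by
    intro u hψu
    have h1 : (1:ℝ) ∈ T u := ⟨⟨zero_le_one, le_rfl⟩, by rw [one_smul]; exact hψu⟩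
    exact le_antisymm (hτle1 u) (le_csSup (hTbdd u) h1)
  have hτ0 : ∀ u : X, 0 ≤ τ u :=
    fun u => le_csSup (hTbdd u) ⟨⟨le_rfl, zero_le_one⟩, by rw [zero_smul, hψ0]⟩
  -- Above τ u (within (τ u, 1]), ψ is positive
  have habove : ∀ u : X, ∀ s : ℝ, τ u < s → s ≤ 1 → 0 < ψ (s • u) := by
    intro u s hτs hs1
    by_contra h
    push_neg at h
    have hmem : s ∈ T u := ⟨⟨le_trans (hτ0 u) (le_of_lt hτs), hs1⟩, h⟩
    exact absurd (le_csSup (hTbdd u) hmem) (not_le.mpr hτs)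
  -- continuity of τ on the domain
  have hτcont : ContinuousOn τ {u : X | 0 < ‖u‖ ∧ ‖u‖ ≤ ρ} := by
    intro u0 hu0
    obtain ⟨hu0n, hu0ρ⟩ := hu0
    rw [ContinuousWithinAt, Metric.tendsto_nhds]
    intro ε hε
    set τ0 := τ u0 with hτ0def
    have hτ0pos : 0 < τ0 := hτpos u0 hu0n
    -- lower bound event
    set ε₁ : ℝ := min (ε / 2) (τ0 / 2) with hε₁
    have hε₁pos : 0 < ε₁ := lt_min (by linarith) (by linarith)
    set s1 : ℝ := τ0 - ε₁ with hs1def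
    have hs1pos : 0 < s1 := by
      have : ε₁ ≤ τ0 / 2 := min_le_right _ _
      simp only [hs1def]; linarith
    have hs1lt : s1 < τ0 := by simp only [hs1def]; linarith
    have hψs1 : ψ (s1 • u0) < 0 := hbelow u0 hu0n hu0ρ s1 hs1pos hs1lt
    have hev1 : ∀ᶠ u in nhds u0, ψ (s1 • u) < 0 := by
      have hc : Continuous fun u : X => ψ (s1 • u) :=
        ψcont.comp (continuous_const.smul continuous_id)
      exact (hc.tendsto u0).eventually (eventually_lt_nhds hψs1)
    have hlow : ∀ᶠ u in nhdsWithin u0 {u : X | 0 < ‖u‖ ∧ ‖u‖ ≤ ρ}, s1 ≤ τ u := by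
      filter_upwards [hev1.filter_mono nhdsWithin_le_nhds] with u hu
      exact le_csSup (hTbdd u) ⟨⟨le_of_lt hs1pos, le_trans (le_of_lt hs1lt) (hτle1 u0)⟩, le_of_lt hu⟩
    -- upper bound event
    have hupp : ∀ᶠ u in nhdsWithin u0 {u : X | 0 < ‖u‖ ∧ ‖u‖ ≤ ρ}, τ u ≤ τ0 + ε / 2 := by
      rcases eq_or_lt_of_le (hτle1 u0) with h1 | h1
      · filter_upwards with u
        calc τ u ≤ 1 := hτle1 u
        _ = τ0 := h1.symm
        _ ≤ τ0 + ε / 2 := by linarith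
      · set ε₂ : ℝ := min (ε / 2) ((1 - τ0) / 2) with hε₂
        have hε₂pos : 0 < ε₂ := lt_min (by linarith) (by linarith)
        set s2 : ℝ := τ0 + ε₂ with hs2def
        have hs2gt : τ0 < s2 := by simp only [hs2def]; linarith
        have hs2le1 : s2 ≤ 1 := by
          have : ε₂ ≤ (1 - τ0) / 2 := min_le_right _ _
          simp only [hs2def]; linarith
        have hψs2 : 0 < ψ (s2 • u0) := habove u0 s2 hs2gt hs2le1
        have hev2 : ∀ᶠ u in nhds u0, 0 < ψ (s2 • u) := by
          have hc : Continuous fun u : X => ψ (s2 • u) :=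
            ψcont.comp (continuous_const.smul continuous_id)
          exact (hc.tendsto u0).eventually (eventually_gt_nhds hψs2)
        filter_upwards [hev2.filter_mono nhdsWithin_le_nhds, self_mem_nhdsWithin] with u hu huD
        by_contra hcon
        push_neg at hcon
        have hs2pos : 0 < s2 := lt_trans hτ0pos hs2gt
        have hs2lt : s2 < τ u := by
          have : ε₂ ≤ ε / 2 := min_le_left _ _
          simp only [hs2def]; linarith
        have := hbelow u huD.1 huD.2 s2 hs2pos hs2lt
        linarith
    filter_upwards [hlow, hupp] with u hu1 hu2
    rw [Real.dist_eq, abs_lt]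
    constructor
    · have : ε₁ ≤ ε / 2 := min_le_left _ _
      simp only [hs1def] at hu1
      linarith
    · linarith
  -- assemble
  refine ⟨fun u => τ u • u, ?_, ?_, ?_⟩
  · exact hτcont.smul continuousOn_id
  · intro u hun huρ
    refine ⟨?_, ?_, hτψ u⟩
    · rw [norm_smul, Real.norm_eq_abs, abs_of_pos (hτpos u hun)]
      exact mul_pos (hτpos u hun) hun
    · rw [norm_smul, Real.norm_eq_abs, abs_of_pos (hτpos u hun)]
      calc τ u * ‖u‖ ≤ 1 * ‖u‖ := by
            apply mul_le_mul_of_nonneg_right (hτle1 u) (norm_nonneg u)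
      _ = ‖u‖ := one_mul _
      _ ≤ ρ := huρ
  · intro u hun huρ hψu
    show τ u • u = u
    rw [hτeq1 u hψu, one_smul]
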